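/- Let A and B be disjoint finite sets of points in the plane such that A ∪ B is not contained in a single line. Then the bivisibility graph B(A,B) has at most one connected component containing an edge; equivalently, every two edges of B(A,B) lie in the same connected component. -/

import Mathlib

/-- Adjacency in the bivisibility graph: one point from `A` and one from `B`, mutually
visible with respect to `A ∪ B` (no point of `A ∪ B` in the open segment between them). -/
def BivisAdj (A B : Finset (ℝ × ℝ)) (x y : ℝ × ℝ) : Prop :=
  x ≠ y ∧ ((x ∈ A ∧ y ∈ B) ∨ (x ∈ B ∧ y ∈ A)) ∧
    ∀ p ∈ A ∪ B, p ∉ openSegment ℝ x y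

/-- The bivisibility graph `B(A,B)` of two finite point sets in the plane. -/
def bivisibilityGraph (A B : Finset (ℝ × ℝ)) : SimpleGraph {p : ℝ × ℝ // p ∈ A ∪ B} where
  Adj u v := BivisAdj A B u.1 v.1
  symm := by
    constructor
    rintro u v ⟨hne, hab, h⟩
    refine ⟨hne.symm, by tauto, fun p hp => ?_⟩
    rw [openSegment_symm]
    exact h p hp
  loopless := by constructor; rintro u ⟨hne, -⟩; exact hne rfl

open Relation Finset

namespace BivisProof

/-- The cross-product functional determining the line through `a` and `b`. -/
def cross (a b x : ℝ × ℝ) : ℝ := (b.1 - a.1) * (x.2 - a.2) - (b.2 - a.2) * (x.1 - a.1)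

lemma cross_self_left (a b : ℝ × ℝ) : cross a b a = 0 := by simp [cross]

lemma cross_self_right (a b : ℝ × ℝ) : cross a b b = 0 := by simp [cross]; ring

lemma cross_affine (a b x y : ℝ × ℝ) (t : ℝ) :
    cross a b ((1 - t) • x + t • y) = (1 - t) * cross a b x + t * cross a b y := by
  simp only [cross, Prod.smul_fst, Prod.smul_snd, Prod.fst_add, Prod.snd_add, smul_eq_mul]
  ring

lemma collinear_of_cross {a b : ℝ × ℝ} (hab : a ≠ b) {S : Set (ℝ × ℝ)}
    (h : ∀ p ∈ S, cross a b p = 0) : Collinear ℝ S := by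
  rw [collinear_iff_exists_forall_eq_smul_vadd]
  refine ⟨a, b - a, fun p hp => ?_⟩
  have hc := h p hp
  simp only [cross] at hc
  by_cases h1 : b.1 - a.1 = 0
  · have h2 : b.2 - a.2 ≠ 0 := by
      intro h2
      exact hab (Prod.ext (by linarith) (by linarith))
    refine ⟨(p.2 - a.2) / (b.2 - a.2), ?_⟩
    have hp1 : p.1 = a.1 := by
      rw [h1] at hc
      have h3 : (b.2 - a.2) * (p.1 - a.1) = 0 := by linarith
      rcases mul_eq_zero.1 h3 with h' | h'
      · exact absurd h' h2
      · linarith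
    rw [Prod.ext_iff]
    simp only [vadd_eq_add, Prod.smul_fst, Prod.smul_snd, Prod.fst_add, Prod.snd_add,
      Prod.fst_sub, Prod.snd_sub, smul_eq_mul]
    constructor
    · rw [h1]; simp [hp1]
    · field_simp
      ring
  · refine ⟨(p.1 - a.1) / (b.1 - a.1), ?_⟩
    rw [Prod.ext_iff]
    simp only [vadd_eq_add, Prod.smul_fst, Prod.smul_snd, Prod.fst_add, Prod.snd_add,
      Prod.fst_sub, Prod.snd_sub, smul_eq_mul]
    constructor
    · field_simp
      ring
    · field_simp
      nlinarith [hc]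

lemma cross_eq_zero_of_collinear {S : Set (ℝ × ℝ)} (hS : Collinear ℝ S) {p q m : ℝ × ℝ}
    (hp : p ∈ S) (hq : q ∈ S) (hm : m ∈ S) : cross p q m = 0 := by
  rw [collinear_iff_exists_forall_eq_smul_vadd] at hS
  obtain ⟨p₀, v, hf⟩ := hS
  obtain ⟨r1, hr1⟩ := hf p hp
  obtain ⟨r2, hr2⟩ := hf q hq
  obtain ⟨r3, hr3⟩ := hf m hm
  subst hr1; subst hr2; subst hr3
  simp only [cross, vadd_eq_add, Prod.smul_fst, Prod.smul_snd, Prod.fst_add, Prod.snd_add,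
    smul_eq_mul]
  ring

lemma exists_cross_ne {S : Set (ℝ × ℝ)} (h : ¬ Collinear ℝ S) :
    ∃ a ∈ S, ∃ b ∈ S, ∃ c ∈ S, a ≠ b ∧ cross a b c ≠ 0 := by
  by_contra hc
  push_neg at hc
  apply h
  by_cases hs : ∃ a ∈ S, ∃ b ∈ S, a ≠ b
  · obtain ⟨a, ha, b, hb, hab⟩ := hs
    exact collinear_of_cross hab (fun p hp => hc a ha b hb p hp hab)
  · push_neg at hs
    rcases Set.eq_empty_or_nonempty S with rfl | ⟨p, hp⟩
    · exact collinear_empty ℝ _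
    · exact Collinear.subset (fun x hx => by rw [hs x hx p hp]; exact Set.mem_singleton p)
        (collinear_singleton ℝ p)

/-- The off-line point minimizing `|cross|` sees every on-line point of `P`. -/
lemma exists_guard (P : Finset (ℝ × ℝ)) (a b : ℝ × ℝ)
    (hex : ∃ w ∈ P, cross a b w ≠ 0) :
    ∃ c ∈ P, cross a b c ≠ 0 ∧ ∀ m ∈ P, cross a b m = 0 →
      ∀ w ∈ openSegment ℝ c m, w ∉ (P : Set (ℝ × ℝ)) := by
  classical
  set S := P.filter (fun p => cross a b p ≠ 0) with hS
  have hSne : S.Nonempty := by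
    obtain ⟨w, hwP, hw⟩ := hex
    exact ⟨w, by simp [hS, hwP, hw]⟩
  obtain ⟨c, hcS, hmin⟩ := S.exists_min_image (fun p => |cross a b p|) hSne
  have hcP : c ∈ P := (Finset.mem_filter.1 hcS).1
  have hc0 : cross a b c ≠ 0 := (Finset.mem_filter.1 hcS).2
  refine ⟨c, hcP, hc0, ?_⟩
  intro m hm hm0 w hw hwP
  rw [openSegment_eq_image] at hw
  obtain ⟨t, ht, rfl⟩ := hw
  obtain ⟨ht0, ht1⟩ := ht
  have hcw : cross a b ((1 - t) • c + t • m) = (1 - t) * cross a b c := by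
    rw [cross_affine, hm0]; ring
  have hwne : cross a b ((1 - t) • c + t • m) ≠ 0 := by
    rw [hcw]
    exact mul_ne_zero (by linarith) hc0
  have hwS : ((1 - t) • c + t • m) ∈ S := Finset.mem_filter.2 ⟨hwP, hwne⟩
  have h1 := hmin _ hwS
  rw [hcw, abs_mul, abs_of_pos (by linarith : (0:ℝ) < 1 - t)] at h1
  have habs : 0 < |cross a b c| := abs_pos.2 hc0
  nlinarith

/-- A noncollinear finite set has at least three distinct extreme points. -/
lemma exists_three_extreme (P : Finset (ℝ × ℝ))
    (h : ¬ Collinear ℝ (P : Set (ℝ × ℝ))) :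
    ∃ z₁ z₂ z₃ : ℝ × ℝ, z₁ ∈ P ∧ z₂ ∈ P ∧ z₃ ∈ P ∧ z₁ ≠ z₂ ∧ z₁ ≠ z₃ ∧ z₂ ≠ z₃ ∧
      z₁ ∉ convexHull ℝ (↑(P.erase z₁) : Set (ℝ × ℝ)) ∧
      z₂ ∉ convexHull ℝ (↑(P.erase z₂) : Set (ℝ × ℝ)) ∧
      z₃ ∉ convexHull ℝ (↑(P.erase z₃) : Set (ℝ × ℝ)) := by
  classical
  set K := convexHull ℝ (P : Set (ℝ × ℝ)) with hK
  have hKcomp : IsCompact K := P.finite_toSet.isCompact_convexHull ℝ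
  have hKconv : Convex ℝ K := convex_convexHull _ _
  set E := K.extremePoints ℝ with hE
  have hEP : E ⊆ (P : Set (ℝ × ℝ)) := extremePoints_convexHull_subset
  have key : ∀ z ∈ E, z ∈ P ∧ z ∉ convexHull ℝ (↑(P.erase z) : Set (ℝ × ℝ)) := by
    intro z hz
    refine ⟨hEP hz, fun hzc => ?_⟩
    have h2 : Convex ℝ (K \ {z}) := ((hKconv.mem_extremePoints_iff_convex_diff).1 hz).2
    have h3 : (↑(P.erase z) : Set (ℝ × ℝ)) ⊆ K \ {z} := by
      intro p hp
      rw [Finset.coe_erase] at hp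
      exact ⟨subset_convexHull ℝ _ hp.1, hp.2⟩
    exact ((convexHull_min h3 h2) hzc).2 rfl
  have hKM : closure (convexHull ℝ E) = K := closure_convexHull_extremePoints hKcomp hKconv
  have hPK : (P : Set (ℝ × ℝ)) ⊆ K := subset_convexHull ℝ _
  by_contra hcon
  push_neg at hcon
  apply h
  have hpair : ∃ e₁ e₂ : ℝ × ℝ, E ⊆ {e₁, e₂} := by
    by_cases h1 : ∃ e, e ∈ E
    · obtain ⟨e₁, he₁⟩ := h1
      by_cases h2 : ∃ e ∈ E, e ≠ e₁
      · obtain ⟨e₂, he₂, he₂₁⟩ := h2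
        refine ⟨e₁, e₂, fun e he => ?_⟩
        by_contra hee
        simp only [Set.mem_insert_iff, Set.mem_singleton_iff, not_or] at hee
        obtain ⟨k1, kext1⟩ := key e₁ he₁
        obtain ⟨k2, kext2⟩ := key e₂ he₂
        obtain ⟨k3, kext3⟩ := key e he
        exact kext3 (hcon e₁ e₂ e k1 k2 k3 (Ne.symm he₂₁) (Ne.symm hee.1) (Ne.symm hee.2)
          kext1 kext2)
      · push_neg at h2
        exact ⟨e₁, e₁, fun e he => by simp [h2 e he]⟩
    · push_neg at h1
      exact ⟨0, 0, fun e he => absurd he (h1 e)⟩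
  obtain ⟨e₁, e₂, hEe⟩ := hpair
  by_cases he : e₁ = e₂
  · subst he
    have h1 : convexHull ℝ E ⊆ convexHull ℝ {e₁} := convexHull_mono (by simpa using hEe)
    rw [convexHull_singleton] at h1
    have h2 : K ⊆ {e₁} := by
      rw [← hKM]
      exact (closure_minimal h1 isClosed_singleton)
    exact Collinear.subset (hPK.trans h2) (collinear_singleton ℝ e₁)
  · have h1 : convexHull ℝ E ⊆ convexHull ℝ {e₁, e₂} := convexHull_mono hEe
    have hfin : (({e₁, e₂} : Set (ℝ × ℝ))).Finite := (Set.finite_singleton e₂).insert e₁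
    have h2 : K ⊆ convexHull ℝ {e₁, e₂} := by
      rw [← hKM]
      exact closure_minimal h1 (hfin.isClosed_convexHull ℝ)
    refine Collinear.subset (hPK.trans h2) ?_
    rw [convexHull_pair]
    apply collinear_of_cross he
    intro p hp
    rw [segment_eq_image] at hp
    obtain ⟨t, _, rfl⟩ := hp
    rw [cross_affine, cross_self_left, cross_self_right]
    ring

section Main

variable {A B : Finset (ℝ × ℝ)}

lemma bivis_symm {x y : ℝ × ℝ} (h : BivisAdj A B x y) : BivisAdj A B y x := by
  obtain ⟨hne, hab, hvis⟩ := h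
  refine ⟨hne.symm, by tauto, fun p hp => ?_⟩
  rw [openSegment_symm]
  exact hvis p hp

lemma bivis_mem_left {x y : ℝ × ℝ} (h : BivisAdj A B x y) : x ∈ A ∪ B := by
  rcases h.2.1 with ⟨h1, _⟩ | ⟨h1, _⟩
  · exact Finset.mem_union_left _ h1
  · exact Finset.mem_union_right _ h1

lemma bivis_mem_right {x y : ℝ × ℝ} (h : BivisAdj A B x y) : y ∈ A ∪ B := by
  rcases h.2.1 with ⟨_, h1⟩ | ⟨_, h1⟩
  · exact Finset.mem_union_right _ h1
  · exact Finset.mem_union_left _ h1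

/-- Main lemma, by strong induction on the number of points. -/
lemma main : ∀ n : ℕ, ∀ A B : Finset (ℝ × ℝ), Disjoint A B →
    ¬ Collinear ℝ ((A ∪ B : Finset (ℝ × ℝ)) : Set (ℝ × ℝ)) → (A ∪ B).card ≤ n →
    ∀ u v x y : ℝ × ℝ, BivisAdj A B u v → BivisAdj A B x y →
      ReflTransGen (BivisAdj A B) u x := by
  intro n
  induction n with
  | zero =>
    intro A B _ _ hcard u v x y huv _
    exfalso
    have := bivis_mem_left huv
    have : (A ∪ B).Nonempty := ⟨u, this⟩
    have := Finset.card_pos.2 this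
    omega
  | succ n IH =>
    intro A B hAB hncol hcard u v x y huv hxy
    have hsymmrel : Symmetric (BivisAdj A B) := fun _ _ h => bivis_symm h
    by_cases hbase : ∃ z ∈ A ∪ B, Collinear ℝ (((A ∪ B).erase z : Finset (ℝ × ℝ)) : Set (ℝ × ℝ))
    · -- Base case: all points but one on a line; z sees everything.
      obtain ⟨z, hzP, hzcol⟩ := hbase
      -- find two distinct points p ≠ q in (A∪B).erase z
      obtain ⟨a, ha, b, hb, c, hc, hab, habc⟩ := exists_cross_ne hncol
      have hthree : ∃ p ∈ (A ∪ B).erase z, ∃ q ∈ (A ∪ B).erase z, p ≠ q := by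
        have hca : c ≠ a := fun h => by rw [h, cross_self_left] at habc; exact habc rfl
        have hcb : c ≠ b := fun h => by rw [h, cross_self_right] at habc; exact habc rfl
        rcases eq_or_ne z a with rfl | hza
        · exact ⟨b, Finset.mem_erase.2 ⟨Ne.symm hab, Finset.mem_coe.1 hb⟩,
            c, Finset.mem_erase.2 ⟨hca, Finset.mem_coe.1 hc⟩, Ne.symm hcb⟩
        · rcases eq_or_ne z b with rfl | hzb
          · exact ⟨a, Finset.mem_erase.2 ⟨hab, Finset.mem_coe.1 ha⟩,
              c, Finset.mem_erase.2 ⟨hcb, Finset.mem_coe.1 hc⟩, Ne.symm hca⟩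
          · exact ⟨a, Finset.mem_erase.2 ⟨Ne.symm hza, Finset.mem_coe.1 ha⟩,
              b, Finset.mem_erase.2 ⟨Ne.symm hzb, Finset.mem_coe.1 hb⟩, hab⟩
      obtain ⟨p, hp, q, hq, hpq⟩ := hthree
      have hlz : ∀ m ∈ (A ∪ B).erase z, cross p q m = 0 :=
        fun m hm => cross_eq_zero_of_collinear hzcol (Finset.mem_coe.2 hp) (Finset.mem_coe.2 hq) (Finset.mem_coe.2 hm)
      have hcz : cross p q z ≠ 0 := by
        intro h0
        apply hncol
        apply collinear_of_cross hpq
        intro m hm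
        rcases eq_or_ne m z with rfl | hmz
        · exact h0
        · exact hlz m (Finset.mem_erase.2 ⟨hmz, hm⟩)
      -- z sees every m in (A∪B).erase z
      have hsee : ∀ m ∈ (A ∪ B).erase z, ∀ w ∈ openSegment ℝ z m, w ∉ (A ∪ B) := by
        intro m hm w hw hwP
        rw [openSegment_eq_image] at hw
        obtain ⟨t, ⟨ht0, ht1⟩, rfl⟩ := hw
        have hcw : cross p q ((1 - t) • z + t • m) = (1 - t) * cross p q z := by
          rw [cross_affine, hlz m hm]; ring
        have hwz : (1 - t) • z + t • m ≠ z := by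
          intro h
          rw [h] at hcw
          have : t * cross p q z = 0 := by linarith
          rcases mul_eq_zero.1 this with h' | h'
          · linarith
          · exact hcz h'
        have : cross p q ((1 - t) • z + t • m) = 0 :=
          hlz _ (Finset.mem_erase.2 ⟨hwz, hwP⟩)
        rw [hcw] at this
        rcases mul_eq_zero.1 this with h' | h'
        · linarith
        · exact hcz h'
      -- every edge endpoint reaches z
      have hreach : ∀ a' b' : ℝ × ℝ, BivisAdj A B a' b' →
          ReflTransGen (BivisAdj A B) a' z := by
        intro a' b' h
        have hedge : ∀ w : ℝ × ℝ, w ∈ A ∪ B → w ≠ z →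
            ((w ∈ A ∧ z ∈ B) ∨ (w ∈ B ∧ z ∈ A)) → BivisAdj A B w z := by
          intro w hw hwz htypes
          refine ⟨hwz, htypes, fun r hr hseg => ?_⟩
          rw [openSegment_symm] at hseg
          exact hsee w (Finset.mem_erase.2 ⟨hwz, hw⟩) r hseg hr
        rcases Finset.mem_union.1 hzP with hzA | hzB
        · -- z ∈ A; connect via the B-endpoint of the edge
          rcases h.2.1 with ⟨haA, hbB⟩ | ⟨haB, hbA⟩
          · rcases eq_or_ne a' z with rfl | haz
            · exact ReflTransGen.refl
            · have h1 : BivisAdj A B b' z := by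
                refine hedge b' (Finset.mem_union_right _ hbB) ?_ (Or.inr ⟨hbB, hzA⟩)
                exact fun hh => (Finset.disjoint_left.1 hAB hzA) (hh ▸ hbB)
              exact (ReflTransGen.single h).tail h1
          · rcases eq_or_ne a' z with rfl | haz
            · exact ReflTransGen.refl
            · exact ReflTransGen.single (hedge a' (Finset.mem_union_right _ haB) haz
                (Or.inr ⟨haB, hzA⟩))
        · rcases h.2.1 with ⟨haA, hbB⟩ | ⟨haB, hbA⟩
          · rcases eq_or_ne a' z with rfl | haz
            · exact ReflTransGen.refl
            · exact ReflTransGen.single (hedge a' (Finset.mem_union_left _ haA) haz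
                (Or.inl ⟨haA, hzB⟩))
          · rcases eq_or_ne a' z with rfl | haz
            · exact ReflTransGen.refl
            · have h1 : BivisAdj A B b' z := by
                refine hedge b' (Finset.mem_union_left _ hbA) ?_ (Or.inl ⟨hbA, hzB⟩)
                exact fun hh => (Finset.disjoint_left.1 hAB (hh ▸ hbA)) hzB
              exact (ReflTransGen.single h).tail h1
      exact (hreach u v huv).trans ((@Std.Symm.symm _ (ReflTransGen (BivisAdj A B)) (@ReflTransGen.stdSymm _ _ ⟨fun _ _ h => hsymmrel h⟩) _ _) (hreach x y hxy))
    · -- Main case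
      push_neg at hbase
      by_contra hne
      -- R: for an extreme z, any two edges avoiding z have related endpoints.
      have R : ∀ z ∈ A ∪ B, z ∉ convexHull ℝ (↑((A ∪ B).erase z) : Set (ℝ × ℝ)) →
          ∀ x₁ y₁ x₂ y₂ : ℝ × ℝ, BivisAdj A B x₁ y₁ → BivisAdj A B x₂ y₂ →
          z ≠ x₁ → z ≠ y₁ → z ≠ x₂ → z ≠ y₂ →
          ReflTransGen (BivisAdj A B) x₁ x₂ := by
        intro z hzP hzext x₁ y₁ x₂ y₂ h₁ h₂ hzx₁ hzy₁ hzx₂ hzy₂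
        set A' := A.erase z with hA'
        set B' := B.erase z with hB'
        have hunion : A' ∪ B' = (A ∪ B).erase z := (Finset.erase_union_distrib A B z).symm
        have hd : Disjoint A' B' :=
          Finset.disjoint_of_subset_left (Finset.erase_subset _ _)
            (Finset.disjoint_of_subset_right (Finset.erase_subset _ _) hAB)
        have hnc : ¬ Collinear ℝ ((A' ∪ B' : Finset (ℝ × ℝ)) : Set (ℝ × ℝ)) := by
          rw [hunion]; exact hbase z hzP
        have hcard' : (A' ∪ B').card ≤ n := by
          rw [hunion]
          have h1 := Finset.card_erase_of_mem hzP
          have h2 : 1 ≤ (A ∪ B).card := Finset.card_pos.2 ⟨z, hzP⟩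
          omega
        have hrestrict : ∀ s t : ℝ × ℝ, BivisAdj A B s t → s ≠ z → t ≠ z →
            BivisAdj A' B' s t := by
          intro s t h hs ht
          obtain ⟨hne', htypes, hvis⟩ := h
          refine ⟨hne', ?_, fun r hr => hvis r ?_⟩
          · rcases htypes with ⟨h1, h2⟩ | ⟨h1, h2⟩
            · exact Or.inl ⟨Finset.mem_erase.2 ⟨hs, h1⟩, Finset.mem_erase.2 ⟨ht, h2⟩⟩
            · exact Or.inr ⟨Finset.mem_erase.2 ⟨hs, h1⟩, Finset.mem_erase.2 ⟨ht, h2⟩⟩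
          · rw [hunion] at hr
            exact Finset.mem_of_mem_erase hr
        have hlift : ∀ s t : ℝ × ℝ, BivisAdj A' B' s t → BivisAdj A B s t := by
          intro s t h
          obtain ⟨hne', htypes, hvis⟩ := h
          have hsP : s ∈ (A ∪ B).erase z := by
            rw [← hunion]
            rcases htypes with ⟨h1, _⟩ | ⟨h1, _⟩
            · exact Finset.mem_union_left _ h1
            · exact Finset.mem_union_right _ h1
          have htP : t ∈ (A ∪ B).erase z := by
            rw [← hunion]
            rcases htypes with ⟨_, h1⟩ | ⟨_, h1⟩
            · exact Finset.mem_union_right _ h1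
            · exact Finset.mem_union_left _ h1
          refine ⟨hne', ?_, ?_⟩
          · rcases htypes with ⟨h1, h2⟩ | ⟨h1, h2⟩
            · exact Or.inl ⟨Finset.mem_of_mem_erase h1, Finset.mem_of_mem_erase h2⟩
            · exact Or.inr ⟨Finset.mem_of_mem_erase h1, Finset.mem_of_mem_erase h2⟩
          · intro r hr hseg
            rcases eq_or_ne r z with hrz | hrz
            · -- z would be inside the segment, contradicting extremality
              rw [hrz] at hseg
              apply hzext
              have h1 : openSegment ℝ s t ⊆ convexHull ℝ {s, t} := by
                rw [convexHull_pair]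
                exact openSegment_subset_segment ℝ s t
              have h2 : ({s, t} : Set (ℝ × ℝ)) ⊆ (↑((A ∪ B).erase z) : Set (ℝ × ℝ)) := by
                intro w hw
                rcases hw with rfl | hw
                · exact hsP
                · rw [Set.mem_singleton_iff] at hw; subst hw; exact htP
              exact convexHull_mono h2 (h1 hseg)
            · apply hvis r _ hseg
              rw [hunion]
              exact Finset.mem_erase.2 ⟨hrz, hr⟩
        have hIH := IH A' B' hd hnc hcard' x₁ y₁ x₂ y₂
          (hrestrict x₁ y₁ h₁ (Ne.symm hzx₁) (Ne.symm hzy₁))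
          (hrestrict x₂ y₂ h₂ (Ne.symm hzx₂) (Ne.symm hzy₂))
        exact ReflTransGen.mono (fun s t h => hlift s t h) _ _ hIH
      -- labels
      have label : ∀ z ∈ A ∪ B, z ∉ convexHull ℝ (↑((A ∪ B).erase z) : Set (ℝ × ℝ)) →
          (∀ x' y' : ℝ × ℝ, BivisAdj A B x' y' → ReflTransGen (BivisAdj A B) u x' →
            z = x' ∨ z = y') ∨
          (∀ x' y' : ℝ × ℝ, BivisAdj A B x' y' → ReflTransGen (BivisAdj A B) x x' →
            z = x' ∨ z = y') := by
        intro z hz hzext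
        by_cases h2 : z = x ∨ z = y
        · by_cases h1 : z = u ∨ z = v
          · exfalso
            apply hne
            have hu : ReflTransGen (BivisAdj A B) u z := by
              rcases h1 with h | h
              · rw [h]
              · rw [h]; exact ReflTransGen.single huv
            have hx : ReflTransGen (BivisAdj A B) z x := by
              rcases h2 with h | h
              · rw [h]
              · rw [h]; exact ReflTransGen.single (bivis_symm hxy)
            exact hu.trans hx
          · push_neg at h1
            right
            intro x' y' hx'y' hxx'
            by_contra hno
            push_neg at hno
            have h3 := R z hz hzext x' y' u v hx'y' huv hno.1 hno.2 h1.1 h1.2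
            exact hne ((@Std.Symm.symm _ (ReflTransGen (BivisAdj A B)) (@ReflTransGen.stdSymm _ _ ⟨fun _ _ h => hsymmrel h⟩) _ _) (hxx'.trans h3))
        · push_neg at h2
          left
          intro x' y' hx'y' hux'
          by_contra hno
          push_neg at hno
          have h3 := R z hz hzext x' y' x y hx'y' hxy hno.1 hno.2 h2.1 h2.2
          exact hne (hux'.trans h3)
      -- the final contradiction from two distinct same-labelled extreme points
      have final : ∀ a b z z' : ℝ × ℝ, BivisAdj A B a b → z ≠ z' →
          (∀ x' y' : ℝ × ℝ, BivisAdj A B x' y' → ReflTransGen (BivisAdj A B) a x' →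
            z = x' ∨ z = y') →
          (∀ x' y' : ℝ × ℝ, BivisAdj A B x' y' → ReflTransGen (BivisAdj A B) a x' →
            z' = x' ∨ z' = y') → False := by
        intro a b z z' hab hzz' hz hz'
        have h1 := hz a b hab ReflTransGen.refl
        have h2 := hz' a b hab ReflTransGen.refl
        have hw : ∃ w ∈ A ∪ B, cross a b w ≠ 0 := by
          by_contra hcc
          push_neg at hcc
          exact hncol (collinear_of_cross hab.1 (fun p hp => hcc p hp))
        obtain ⟨c, hcP, hc0, hcvis⟩ := exists_guard (A ∪ B) a b hw
        have hca : c ≠ a := fun h => hc0 (h ▸ cross_self_left a b)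
        have hcb : c ≠ b := fun h => hc0 (h ▸ cross_self_right a b)
        -- build an edge from c to the opposite-type endpoint of (a,b)
        have hedge : ∃ e : ℝ × ℝ, (e = a ∨ e = b) ∧ BivisAdj A B c e ∧
            ReflTransGen (BivisAdj A B) a c := by
          have hva : ∀ r ∈ A ∪ B, r ∉ openSegment ℝ c a :=
            fun r hr hseg => hcvis a (bivis_mem_left hab) (cross_self_left a b) r hseg hr
          have hvb : ∀ r ∈ A ∪ B, r ∉ openSegment ℝ c b :=
            fun r hr hseg => hcvis b (bivis_mem_right hab) (cross_self_right a b) r hseg hr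
          rcases hab.2.1 with ⟨haA, hbB⟩ | ⟨haB, hbA⟩
          · rcases Finset.mem_union.1 hcP with hcA | hcB
            · refine ⟨b, Or.inr rfl, ⟨hcb, Or.inl ⟨hcA, hbB⟩, hvb⟩, ?_⟩
              exact (ReflTransGen.single hab).tail (bivis_symm ⟨hcb, Or.inl ⟨hcA, hbB⟩, hvb⟩)
            · refine ⟨a, Or.inl rfl, ⟨hca, Or.inr ⟨hcB, haA⟩, hva⟩, ?_⟩
              exact ReflTransGen.single (bivis_symm ⟨hca, Or.inr ⟨hcB, haA⟩, hva⟩)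
          · rcases Finset.mem_union.1 hcP with hcA | hcB
            · refine ⟨a, Or.inl rfl, ⟨hca, Or.inl ⟨hcA, haB⟩, hva⟩, ?_⟩
              exact ReflTransGen.single (bivis_symm ⟨hca, Or.inl ⟨hcA, haB⟩, hva⟩)
            · refine ⟨b, Or.inr rfl, ⟨hcb, Or.inr ⟨hcB, hbA⟩, hvb⟩, ?_⟩
              exact (ReflTransGen.single hab).tail (bivis_symm ⟨hcb, Or.inr ⟨hcB, hbA⟩, hvb⟩)
        obtain ⟨e, hee, hce, hac⟩ := hedge
        have h3 := hz c e hce hac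
        have h4 := hz' c e hce hac
        -- z, z' ∈ {a,b}, z,z' ∈ {c,e}, c ∉ {a,b}, z ≠ z'
        have hzne : z ≠ c := by
          rcases h1 with h | h
          · rw [h]; exact Ne.symm hca
          · rw [h]; exact Ne.symm hcb
        have hz'ne : z' ≠ c := by
          rcases h2 with h | h
          · rw [h]; exact Ne.symm hca
          · rw [h]; exact Ne.symm hcb
        have hz_e : z = e := by rcases h3 with h | h; exact absurd h hzne; exact h
        have hz'_e : z' = e := by rcases h4 with h | h; exact absurd h hz'ne; exact h
        exact hzz' (hz_e.trans hz'_e.symm)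
      obtain ⟨z₁, z₂, z₃, hp1, hp2, hp3, h12, h13, h23, he1, he2, he3⟩ :=
        exists_three_extreme (A ∪ B) hncol
      have l₁ := label z₁ hp1 he1
      have l₂ := label z₂ hp2 he2
      have l₃ := label z₃ hp3 he3
      rcases l₁ with h₁ | h₁ <;> rcases l₂ with h₂ | h₂ <;> rcases l₃ with h₃ | h₃
      · exact final u v z₁ z₂ huv h12 h₁ h₂
      · exact final u v z₁ z₂ huv h12 h₁ h₂
      · exact final u v z₁ z₃ huv h13 h₁ h₃
      · exact final x y z₂ z₃ hxy h23 h₂ h₃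
      · exact final u v z₂ z₃ huv h23 h₂ h₃
      · exact final x y z₁ z₃ hxy h13 h₁ h₃
      · exact final x y z₁ z₂ hxy h12 h₁ h₂
      · exact final x y z₁ z₂ hxy h12 h₁ h₂


lemma reach_of_rtg {A B : Finset (ℝ × ℝ)} {u : ℝ × ℝ} (hu : u ∈ A ∪ B) :
    ∀ {x : ℝ × ℝ}, ReflTransGen (BivisAdj A B) u x → ∀ hx : x ∈ A ∪ B,
      (bivisibilityGraph A B).Reachable ⟨u, hu⟩ ⟨x, hx⟩ := by
  intro x h
  induction h with
  | refl => intro hx; exact SimpleGraph.Reachable.refl _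
  | @tail b c hb hbc ih =>
    intro hc
    have hbmem : b ∈ A ∪ B := bivis_mem_left hbc
    exact (ih hbmem).trans (SimpleGraph.Adj.reachable (show BivisAdj A B b c from hbc))

end Main

end BivisProof

/-- Let `A` and `B` be disjoint finite point sets with `A ∪ B` not collinear. Then the
bivisibility graph `B(A,B)` has at most one connected component containing an edge:
the endpoints of any two edges are joined by paths. -/
theorem bivisibility_one_nontrivial_component
    (A B : Finset (ℝ × ℝ)) (hAB : Disjoint A B)
    (hncol : ¬ Collinear ℝ ((A ∪ B : Finset (ℝ × ℝ)) : Set (ℝ × ℝ))) :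
    ∀ u v x y : {p : ℝ × ℝ // p ∈ A ∪ B},
      (bivisibilityGraph A B).Adj u v → (bivisibilityGraph A B).Adj x y →
      (bivisibilityGraph A B).Reachable u x := by
  intro u v x y huv hxy
  have h := BivisProof.main (A ∪ B).card A B hAB hncol le_rfl u.1 v.1 x.1 y.1 huv hxy
  have h2 := BivisProof.reach_of_rtg u.2 h x.2
  exact h2
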